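/- Let φ be a conformal immersion on an open set U ⊆ ℝ² with conformal factor λ, with unit normal n := (φ_u × φ_v)/‖φ_u × φ_v‖, mean curvature H := ⟨Δφ, n⟩/(2λ²), and μ := (∂_z φ_z, n). Then at every point of U the Laplacian of μ satisfies Δμ = 2λ (2 (∂_z λ)(∂_z H) + λ ∂_z∂_z H), where Δ := ∂_uu + ∂_vv is the real Laplacian (equivalently, ∂_z∂_z̄ μ = λ (∂_z λ)(∂_z H) + (λ²/2) ∂_z∂_z H; this is the differentiated Codazzi equation, the paper's equation (19) with the convention Δ = 4 ∂_z∂_z̄). -/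

import Mathlib

open Complex

noncomputable section

/-- Euclidean 3-space. -/
abbrev E3 : Type := EuclideanSpace ℝ (Fin 3)

/-- Partial derivative in the first (u) coordinate direction. -/
def pu {F : Type} [NormedAddCommGroup F] [NormedSpace ℝ F]
    (f : ℝ × ℝ → F) (p : ℝ × ℝ) : F := fderiv ℝ f p (1, 0)

/-- Partial derivative in the second (v) coordinate direction. -/
def pv {F : Type} [NormedAddCommGroup F] [NormedSpace ℝ F]
    (f : ℝ × ℝ → F) (p : ℝ × ℝ) : F := fderiv ℝ f p (0, 1)

/-- Cross product on ℝ³. -/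
def cross (a b : E3) : E3 :=
  (WithLp.equiv 2 (Fin 3 → ℝ)).symm
    ![a 1 * b 2 - a 2 * b 1, a 2 * b 0 - a 0 * b 2, a 0 * b 1 - a 1 * b 0]

/-- The Euclidean inner product on ℝ³. -/
def ip (a b : E3) : ℝ := @inner ℝ _ _ a b

/-- `φ` is a smooth conformal immersion on the open set `U ⊆ ℝ²` with
(smooth, positive) conformal factor `lam`:  ⟨φ_u,φ_u⟩ = λ², ⟨φ_v,φ_v⟩ = λ²,
⟨φ_u,φ_v⟩ = 0 at every point of `U`. -/
def IsConfImm (U : Set (ℝ × ℝ)) (φ : ℝ × ℝ → E3) (lam : ℝ × ℝ → ℝ) : Prop :=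
  IsOpen U ∧ ContDiffOn ℝ (⊤ : ℕ∞) φ U ∧ ContDiffOn ℝ (⊤ : ℕ∞) lam U ∧
    ∀ p ∈ U, 0 < lam p ∧
      ip (pu φ p) (pu φ p) = (lam p) ^ 2 ∧
      ip (pv φ p) (pv φ p) = (lam p) ^ 2 ∧
      ip (pu φ p) (pv φ p) = 0

/-- Complexification ℝ³ ↪ ℂ³. -/
def toC (x : E3) : Fin 3 → ℂ := fun j => (x j : ℂ)

/-- Complex-bilinear dot product on ℂ³:  (a,b) = Σⱼ aⱼ bⱼ. -/
def cdot (a b : Fin 3 → ℂ) : ℂ := ∑ j, a j * b j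

/-- ∂_z = ½(∂_u − i ∂_v) for maps into complex normed spaces. -/
def dz {F : Type} [NormedAddCommGroup F] [NormedSpace ℂ F]
    (f : ℝ × ℝ → F) (p : ℝ × ℝ) : F :=
  (2 : ℂ)⁻¹ • (pu f p - Complex.I • pv f p)

/-- ∂_z̄ = ½(∂_u + i ∂_v) for maps into complex normed spaces. -/
def dzbar {F : Type} [NormedAddCommGroup F] [NormedSpace ℂ F]
    (f : ℝ × ℝ → F) (p : ℝ × ℝ) : F :=
  (2 : ℂ)⁻¹ • (pu f p + Complex.I • pv f p)

/-- `f_z := ½(f_u − i f_v) ∈ ℂ³` for a real-vector-valued map `f` (in particular `φ_z`). -/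
def phiz (f : ℝ × ℝ → E3) (p : ℝ × ℝ) : Fin 3 → ℂ :=
  (2 : ℂ)⁻¹ • (toC (pu f p) - Complex.I • toC (pv f p))

/-- `f_z̄ := ½(f_u + i f_v) ∈ ℂ³` for a real-vector-valued map `f` (in particular `φ_z̄`). -/
def phizbar (f : ℝ × ℝ → E3) (p : ℝ × ℝ) : Fin 3 → ℂ :=
  (2 : ℂ)⁻¹ • (toC (pu f p) + Complex.I • toC (pv f p))

/-- The unit normal n = (φ_u × φ_v)/‖φ_u × φ_v‖. -/
def nvec (φ : ℝ × ℝ → E3) (p : ℝ × ℝ) : E3 :=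
  ‖cross (pu φ p) (pv φ p)‖⁻¹ • cross (pu φ p) (pv φ p)

/-- Componentwise Laplacian Δ = ∂_uu + ∂_vv. -/
def lap {F : Type} [NormedAddCommGroup F] [NormedSpace ℝ F]
    (f : ℝ × ℝ → F) (p : ℝ × ℝ) : F := pu (pu f) p + pv (pv f) p

/-- Mean curvature H = ⟨Δφ, n⟩/(2λ²). -/
def mcurv (φ : ℝ × ℝ → E3) (lam : ℝ × ℝ → ℝ) (p : ℝ × ℝ) : ℝ :=
  ip (lap φ p) (nvec φ p) / (2 * (lam p) ^ 2)

/-- μ := (∂_z φ_z, n). -/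
def muQ (φ : ℝ × ℝ → E3) (p : ℝ × ℝ) : ℂ :=
  cdot (dz (phiz φ) p) (toC (nvec φ p))

section pd
variable {F G : Type} [NormedAddCommGroup F] [NormedSpace ℝ F]
  [NormedAddCommGroup G] [NormedSpace ℝ G]

/-- directional derivative -/
def pd (w : ℝ × ℝ) (f : ℝ × ℝ → F) (p : ℝ × ℝ) : F := fderiv ℝ f p w

lemma pu_eq_pd (f : ℝ × ℝ → F) : pu f = pd (1,0) f := rfl
lemma pv_eq_pd (f : ℝ × ℝ → F) : pv f = pd (0,1) f := rfl

lemma diffAt {f : ℝ × ℝ → F} {p : ℝ × ℝ} (hf : ContDiffAt ℝ (⊤:ℕ∞) f p) :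
    DifferentiableAt ℝ f p := hf.differentiableAt (by norm_cast)

lemma pd_congr_nhds {f g : ℝ × ℝ → F} {p : ℝ × ℝ} (w : ℝ × ℝ)
    (h : f =ᶠ[nhds p] g) : pd w f p = pd w g p := by
  unfold pd; rw [h.fderiv_eq]

lemma pd_congr_open {U : Set (ℝ × ℝ)} (hU : IsOpen U) {f g : ℝ × ℝ → F} {p : ℝ × ℝ}
    (hp : p ∈ U) (w : ℝ × ℝ) (h : ∀ q ∈ U, f q = g q) : pd w f p = pd w g p :=
  pd_congr_nhds w (Filter.eventuallyEq_of_mem (hU.mem_nhds hp) h)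

lemma pd_add {f g : ℝ × ℝ → F} {p : ℝ × ℝ} (w : ℝ × ℝ)
    (hf : DifferentiableAt ℝ f p) (hg : DifferentiableAt ℝ g p) :
    pd w (fun q => f q + g q) p = pd w f p + pd w g p := by
  unfold pd; rw [fderiv_fun_add hf hg]; rfl

lemma pd_sub {f g : ℝ × ℝ → F} {p : ℝ × ℝ} (w : ℝ × ℝ)
    (hf : DifferentiableAt ℝ f p) (hg : DifferentiableAt ℝ g p) :
    pd w (fun q => f q - g q) p = pd w f p - pd w g p := by
  unfold pd; rw [fderiv_fun_sub hf hg]; rfl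

lemma pd_smul {c : ℝ × ℝ → ℝ} {f : ℝ × ℝ → F} {p : ℝ × ℝ} (w : ℝ × ℝ)
    (hc : DifferentiableAt ℝ c p) (hf : DifferentiableAt ℝ f p) :
    pd w (fun q => c q • f q) p = pd w c p • f p + c p • pd w f p := by
  unfold pd; rw [fderiv_fun_smul hc hf]; simp [add_comm]

lemma pd_mul {c f : ℝ × ℝ → ℝ} {p : ℝ × ℝ} (w : ℝ × ℝ)
    (hc : DifferentiableAt ℝ c p) (hf : DifferentiableAt ℝ f p) :
    pd w (fun q => c q * f q) p = pd w c p * f p + c p * pd w f p := by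
  unfold pd; rw [fderiv_fun_mul hc hf]; simp [add_comm]; ring

lemma pd_cmul {c f : ℝ × ℝ → ℂ} {p : ℝ × ℝ} (w : ℝ × ℝ)
    (hc : DifferentiableAt ℝ c p) (hf : DifferentiableAt ℝ f p) :
    pd w (fun q => c q * f q) p = pd w c p * f p + c p * pd w f p := by
  unfold pd; rw [fderiv_fun_mul hc hf]; simp [add_comm]; ring

lemma pd_const (w : ℝ × ℝ) (c : F) (p : ℝ × ℝ) : pd w (fun _ => c) p = 0 := by
  unfold pd; simp

lemma pd_ip {f g : ℝ × ℝ → E3} {p : ℝ × ℝ} (w : ℝ × ℝ)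
    (hf : DifferentiableAt ℝ f p) (hg : DifferentiableAt ℝ g p) :
    pd w (fun q => ip (f q) (g q)) p
      = ip (pd w f p) (g p) + ip (f p) (pd w g p) := by
  unfold pd ip; rw [fderiv_inner_apply (𝕜 := ℝ) hf hg]; exact add_comm _ _

lemma pd_clm (L : F →L[ℝ] G) {f : ℝ × ℝ → F} {p : ℝ × ℝ} (w : ℝ × ℝ)
    (hf : DifferentiableAt ℝ f p) :
    pd w (fun q => L (f q)) p = L (pd w f p) := by
  unfold pd
  rw [show (fun q => L (f q)) = (⇑L ∘ f) from rfl,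
    (L.hasFDerivAt.comp p hf.hasFDerivAt).fderiv]; rfl

lemma contDiffAt_pd (w : ℝ × ℝ) {f : ℝ × ℝ → F} {p : ℝ × ℝ}
    (hf : ContDiffAt ℝ (⊤:ℕ∞) f p) : ContDiffAt ℝ (⊤:ℕ∞) (pd w f) p := by
  have h1 : ContDiffAt ℝ (⊤:ℕ∞) (fderiv ℝ f) p := hf.fderiv_right (by norm_cast)
  exact h1.clm_apply contDiffAt_const

lemma pd_comm {f : ℝ × ℝ → F} {p : ℝ × ℝ} (hf : ContDiffAt ℝ (⊤:ℕ∞) f p) (w w' : ℝ × ℝ) :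
    pd w (pd w' f) p = pd w' (pd w f) p := by
  have h' : ContDiffAt ℝ (⊤:ℕ∞) (fderiv ℝ f) p := hf.fderiv_right (by norm_cast)
  have hd : DifferentiableAt ℝ (fderiv ℝ f) p := h'.differentiableAt (by norm_cast)
  have h1 : ∀ u u' : ℝ × ℝ, pd u (pd u' f) p = fderiv ℝ (fderiv ℝ f) p u u' := by
    intro u u'
    unfold pd
    rw [fderiv_clm_apply hd (differentiableAt_const _)]
    simp
  rw [h1, h1]
  exact (hf.isSymmSndFDerivAt (by rw [minSmoothness_of_isRCLikeNormedField]; exact WithTop.coe_le_coe.mpr (le_top : (2:ℕ∞) ≤ ⊤))) w w'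
end pd

section algebra
lemma ip_eq (a b : E3) : ip a b = a 0 * b 0 + a 1 * b 1 + a 2 * b 2 := by
  simp [ip, PiLp.inner_apply, RCLike.inner_apply, Fin.sum_univ_three, mul_comm]

lemma cross0 (a b : E3) : cross a b 0 = a 1 * b 2 - a 2 * b 1 := rfl
lemma cross1 (a b : E3) : cross a b 1 = a 2 * b 0 - a 0 * b 2 := rfl
lemma cross2 (a b : E3) : cross a b 2 = a 0 * b 1 - a 1 * b 0 := rfl

lemma ip_comm (a b : E3) : ip a b = ip b a := by simp [ip_eq]; ring

lemma ip_cross_left (a b : E3) : ip (cross a b) a = 0 := by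
  simp [ip_eq, cross0, cross1, cross2]; ring

lemma ip_cross_right (a b : E3) : ip (cross a b) b = 0 := by
  simp [ip_eq, cross0, cross1, cross2]; ring

lemma ip_cross_cross (a b : E3) :
    ip (cross a b) (cross a b) = ip a a * ip b b - ip a b ^ 2 := by
  simp [ip_eq, cross0, cross1, cross2]; ring

lemma ip_add_left (x y z : E3) : ip (x + y) z = ip x z + ip y z := by
  simp [ip, inner_add_left]

lemma ip_smul_left (c : ℝ) (x z : E3) : ip (c • x) z = c * ip x z :=
  real_inner_smul_left x z c

lemma ip_smul_right (c : ℝ) (x z : E3) : ip x (c • z) = c * ip x z :=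
  real_inner_smul_right x z c

lemma norm_eq_sqrt_ip (x : E3) : ‖x‖ = Real.sqrt (ip x x) := by
  rw [EuclideanSpace.norm_eq]
  congr 1
  simp [ip_eq, Fin.sum_univ_three, Real.norm_eq_abs, sq_abs, pow_two]

lemma frame_id (a b w : E3) :
    ip (cross a b) (cross a b) • w
      = (ip w b * ip a a) • b - (ip w b * ip a b) • a - (ip w a * ip a b) • b
        + (ip w a * ip b b) • a + ip w (cross a b) • cross a b := by
  have h : ∀ j : Fin 3, ip (cross a b) (cross a b) * w j
      = (ip w b * ip a a) * b j - (ip w b * ip a b) * a j - (ip w a * ip a b) * b j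
        + (ip w a * ip b b) * a j + ip w (cross a b) * cross a b j := by
    intro j
    fin_cases j <;> simp [ip_eq, cross0, cross1, cross2] <;> ring
  ext j
  simpa using h j

lemma frame_decomp (a b w : E3) (L : ℝ) (hL : L ≠ 0)
    (ha : ip a a = L^2) (hb : ip b b = L^2) (hab : ip a b = 0) :
    w = (ip w a / L^2) • a + (ip w b / L^2) • b
        + ip w ((L^2)⁻¹ • cross a b) • ((L^2)⁻¹ • cross a b) := by
  have hj := frame_id a b w
  rw [ha, hb, hab] at hj
  ext j
  have h1 := congrArg (fun v : E3 => v j) hj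
  simp only [PiLp.smul_apply, PiLp.add_apply, PiLp.sub_apply, smul_eq_mul] at h1 ⊢
  rw [ip_cross_cross, ha, hb, hab] at h1
  rw [ip_smul_right]
  have hL2 : L^2 ≠ 0 := pow_ne_zero _ hL
  field_simp
  linear_combination h1
end algebra

section complexify
def LtoC : E3 →L[ℝ] (Fin 3 → ℂ) :=
  ContinuousLinearMap.pi (fun j => Complex.ofRealCLM.comp (EuclideanSpace.proj j))

lemma toC_eq (x : E3) : toC x = LtoC x := rfl

lemma pd_toC {f : ℝ × ℝ → E3} {p : ℝ × ℝ} (w : ℝ × ℝ) (hf : DifferentiableAt ℝ f p) :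
    pd w (fun q => toC (f q)) p = toC (pd w f p) := by
  simp only [toC_eq]; exact pd_clm LtoC w hf

lemma pd_ofReal {r : ℝ × ℝ → ℝ} {p : ℝ × ℝ} (w : ℝ × ℝ) (hr : DifferentiableAt ℝ r p) :
    pd w (fun q => ((r q : ℝ) : ℂ)) p = ((pd w r p : ℝ) : ℂ) := by
  have := pd_clm Complex.ofRealCLM w hr
  simpa using this

lemma pd_csmul {f : ℝ × ℝ → Fin 3 → ℂ} {p : ℝ × ℝ} (w : ℝ × ℝ) (c : ℂ)
    (hf : DifferentiableAt ℝ f p) :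
    pd w (fun q => c • f q) p = c • pd w f p := by
  unfold pd; rw [fderiv_fun_const_smul hf c]; rfl

lemma pd_csmul' {f : ℝ × ℝ → ℂ} {p : ℝ × ℝ} (w : ℝ × ℝ) (c : ℂ)
    (hf : DifferentiableAt ℝ f p) :
    pd w (fun q => c • f q) p = c • pd w f p := by
  unfold pd; rw [fderiv_fun_const_smul hf c]; rfl

lemma cdot_smul_left (c : ℂ) (X Y : Fin 3 → ℂ) : cdot (c • X) Y = c * cdot X Y := by
  simp [cdot, Finset.mul_sum, mul_assoc]

lemma cdot_add_left (X Y Z : Fin 3 → ℂ) : cdot (X + Y) Z = cdot X Z + cdot Y Z := by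
  simp only [cdot, Pi.add_apply, add_mul, Finset.sum_add_distrib]

lemma cdot_sub_left (X Y Z : Fin 3 → ℂ) : cdot (X - Y) Z = cdot X Z - cdot Y Z := by
  simp only [cdot, Pi.sub_apply, sub_mul, Finset.sum_sub_distrib]

lemma cdot_toC_toC (x y : E3) : cdot (toC x) (toC y) = ((ip x y : ℝ) : ℂ) := by
  simp only [cdot, toC, ip_eq, Fin.sum_univ_three]
  push_cast
  ring

lemma contDiffAt_coord {f : ℝ × ℝ → E3} {p : ℝ × ℝ} (j : Fin 3)
    (hf : ContDiffAt ℝ (⊤:ℕ∞) f p) : ContDiffAt ℝ (⊤:ℕ∞) (fun q => f q j) p :=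
  (contDiffAt_piLp _ |>.1 hf) j

lemma contDiffAt_cross {f g : ℝ × ℝ → E3} {p : ℝ × ℝ}
    (hf : ContDiffAt ℝ (⊤:ℕ∞) f p) (hg : ContDiffAt ℝ (⊤:ℕ∞) g p) :
    ContDiffAt ℝ (⊤:ℕ∞) (fun q => cross (f q) (g q)) p := by
  rw [contDiffAt_piLp _]
  intro i
  fin_cases i <;>
    simp only [cross0, cross1, cross2] <;>
    exact ((contDiffAt_coord _ hf).mul (contDiffAt_coord _ hg)).sub
      ((contDiffAt_coord _ hf).mul (contDiffAt_coord _ hg))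
end complexify

section extra2
variable {F : Type} [NormedAddCommGroup F] [NormedSpace ℝ F]

lemma pd_cst_mul {f : ℝ × ℝ → ℝ} {p : ℝ × ℝ} (w : ℝ × ℝ) (c : ℝ)
    (hf : DifferentiableAt ℝ f p) :
    pd w (fun q => c * f q) p = c * pd w f p := by
  rw [pd_mul w (differentiableAt_const c) hf, pd_const]
  ring

lemma pd_cst_cmul {f : ℝ × ℝ → ℂ} {p : ℝ × ℝ} (w : ℝ × ℝ) (c : ℂ)
    (hf : DifferentiableAt ℝ f p) :
    pd w (fun q => c * f q) p = c * pd w f p := by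
  rw [pd_cmul w (differentiableAt_const c) hf, pd_const]
  ring

lemma diff_ofReal {r : ℝ × ℝ → ℝ} {p : ℝ × ℝ} (hr : DifferentiableAt ℝ r p) :
    DifferentiableAt ℝ (fun q => ((r q : ℝ) : ℂ)) p :=
  Complex.ofRealCLM.differentiableAt.comp p hr

lemma diff_toC {f : ℝ × ℝ → E3} {p : ℝ × ℝ} (hf : DifferentiableAt ℝ f p) :
    DifferentiableAt ℝ (fun q => toC (f q)) p := by
  simp only [toC_eq]
  exact LtoC.differentiableAt.comp p hf
end extra2

section dzsec
variable {F : Type} [NormedAddCommGroup F] [NormedSpace ℂ F]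
lemma dz_eq (f : ℝ × ℝ → F) (p : ℝ × ℝ) :
    dz f p = (2:ℂ)⁻¹ • (pd (1,0) f p - Complex.I • pd (0,1) f p) := rfl
end dzsec

set_option maxHeartbeats 2000000 in
/-- differentiated Codazzi equation:
Δμ = 2λ (2 λ_z H_z + λ H_zz) with Δ = ∂_uu + ∂_vv. -/
theorem conformal_differentiated_codazzi_equation
    (U : Set (ℝ × ℝ)) (φ : ℝ × ℝ → E3) (lam : ℝ × ℝ → ℝ)
    (h : IsConfImm U φ lam) :
    ∀ p ∈ U,
      lap (fun q => muQ φ q) p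
        = 2 * (lam p : ℂ)
            * (2 * dz (fun q => (lam q : ℂ)) p
                  * dz (fun q => (mcurv φ lam q : ℂ)) p
               + (lam p : ℂ) * dz (fun q => dz (fun r => (mcurv φ lam r : ℂ)) q) p) := by
  obtain ⟨hU, hφ, hlam, hconf⟩ := h
  intro p hp
  -- ## smoothness toolkit
  have hsφ : ∀ q ∈ U, ContDiffAt ℝ (⊤:ℕ∞) φ q := fun q hq => hφ.contDiffAt (hU.mem_nhds hq)
  have hslam : ∀ q ∈ U, ContDiffAt ℝ (⊤:ℕ∞) lam q := fun q hq => hlam.contDiffAt (hU.mem_nhds hq)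
  have hsA : ∀ q ∈ U, ContDiffAt ℝ (⊤:ℕ∞) (pd (1,0) φ) q := fun q hq => contDiffAt_pd _ (hsφ q hq)
  have hsB : ∀ q ∈ U, ContDiffAt ℝ (⊤:ℕ∞) (pd (0,1) φ) q := fun q hq => contDiffAt_pd _ (hsφ q hq)
  have hsuu : ∀ q ∈ U, ContDiffAt ℝ (⊤:ℕ∞) (pd (1,0) (pd (1,0) φ)) q := fun q hq => contDiffAt_pd _ (hsA q hq)
  have hsuv : ∀ q ∈ U, ContDiffAt ℝ (⊤:ℕ∞) (pd (1,0) (pd (0,1) φ)) q := fun q hq => contDiffAt_pd _ (hsB q hq)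
  have hsvv : ∀ q ∈ U, ContDiffAt ℝ (⊤:ℕ∞) (pd (0,1) (pd (0,1) φ)) q := fun q hq => contDiffAt_pd _ (hsB q hq)
  have hslamu : ∀ q ∈ U, ContDiffAt ℝ (⊤:ℕ∞) (pd (1,0) lam) q := fun q hq => contDiffAt_pd _ (hslam q hq)
  have hslamv : ∀ q ∈ U, ContDiffAt ℝ (⊤:ℕ∞) (pd (0,1) lam) q := fun q hq => contDiffAt_pd _ (hslam q hq)
  have hlmpos : ∀ q ∈ U, 0 < lam q := fun q hq => (hconf q hq).1
  have hlmne : ∀ q ∈ U, lam q ≠ 0 := fun q hq => ne_of_gt (hlmpos q hq)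
  have hlm2ne : ∀ q ∈ U, (lam q)^2 ≠ 0 := fun q hq => pow_ne_zero _ (hlmne q hq)
  have hsN : ∀ q ∈ U, ContDiffAt ℝ (⊤:ℕ∞) (fun r => (lam r ^ 2)⁻¹ • cross (pd (1,0) φ r) (pd (0,1) φ r)) q := fun q hq =>
    (((hslam q hq).pow 2).inv (hlm2ne q hq)).smul (contDiffAt_cross (hsA q hq) (hsB q hq))
  have hse : ∀ q ∈ U, ContDiffAt ℝ (⊤:ℕ∞) (fun r => ip (pd (1,0) (pd (1,0) φ) r) ((lam r ^ 2)⁻¹ • cross (pd (1,0) φ r) (pd (0,1) φ r))) q := fun q hq =>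
    (hsuu q hq).inner ℝ (hsN q hq)
  have hsf : ∀ q ∈ U, ContDiffAt ℝ (⊤:ℕ∞) (fun r => ip (pd (1,0) (pd (0,1) φ) r) ((lam r ^ 2)⁻¹ • cross (pd (1,0) φ r) (pd (0,1) φ r))) q := fun q hq =>
    (hsuv q hq).inner ℝ (hsN q hq)
  have hsg : ∀ q ∈ U, ContDiffAt ℝ (⊤:ℕ∞) (fun r => ip (pd (0,1) (pd (0,1) φ) r) ((lam r ^ 2)⁻¹ • cross (pd (1,0) φ r) (pd (0,1) φ r))) q := fun q hq =>
    (hsvv q hq).inner ℝ (hsN q hq)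
  have hsH : ∀ q ∈ U, ContDiffAt ℝ (⊤:ℕ∞) (fun r => ((ip (pd (1,0) (pd (1,0) φ) r) ((lam r ^ 2)⁻¹ • cross (pd (1,0) φ r) (pd (0,1) φ r)) + ip (pd (0,1) (pd (0,1) φ) r) ((lam r ^ 2)⁻¹ • cross (pd (1,0) φ r) (pd (0,1) φ r))) / (2 * lam r ^ 2))) q := fun q hq =>
    ((hse q hq).add (hsg q hq)).div (contDiffAt_const.mul ((hslam q hq).pow 2))
      (by simpa using hlm2ne q hq)
  -- ## conformal relations
  have hc1 : ∀ q ∈ U, ip (pd (1,0) φ q) (pd (1,0) φ q) = (lam q)^2 := fun q hq => (hconf q hq).2.1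
  have hc2 : ∀ q ∈ U, ip (pd (0,1) φ q) (pd (0,1) φ q) = (lam q)^2 := fun q hq => (hconf q hq).2.2.1
  have hc3 : ∀ q ∈ U, ip (pd (1,0) φ q) (pd (0,1) φ q) = 0 := fun q hq => (hconf q hq).2.2.2
  -- ## normal vector facts
  have hnvec : ∀ q ∈ U, nvec φ q = (lam q ^ 2)⁻¹ • cross (pd (1,0) φ q) (pd (0,1) φ q) := by
    intro q hq
    have hcc : ip (cross (pd (1,0) φ q) (pd (0,1) φ q)) (cross (pd (1,0) φ q) (pd (0,1) φ q)) = ((lam q)^2)^2 := by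
      rw [ip_cross_cross, hc1 q hq, hc2 q hq, hc3 q hq]; ring
    have hn : ‖cross (pd (1,0) φ q) (pd (0,1) φ q)‖ = (lam q)^2 := by
      rw [norm_eq_sqrt_ip, hcc]
      exact Real.sqrt_sq (sq_nonneg _)
    show ‖cross (pd (1,0) φ q) (pd (0,1) φ q)‖⁻¹ • cross (pd (1,0) φ q) (pd (0,1) φ q) = _
    rw [hn]
  have hAN : ∀ q ∈ U, ip (pd (1,0) φ q) ((lam q ^ 2)⁻¹ • cross (pd (1,0) φ q) (pd (0,1) φ q)) = 0 := by
    intro q hq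
    rw [ip_smul_right, ip_comm, ip_cross_left]; ring
  have hBN : ∀ q ∈ U, ip (pd (0,1) φ q) ((lam q ^ 2)⁻¹ • cross (pd (1,0) φ q) (pd (0,1) φ q)) = 0 := by
    intro q hq
    rw [ip_smul_right, ip_comm, ip_cross_right]; ring
  have hNN : ∀ q ∈ U, ip ((lam q ^ 2)⁻¹ • cross (pd (1,0) φ q) (pd (0,1) φ q)) ((lam q ^ 2)⁻¹ • cross (pd (1,0) φ q) (pd (0,1) φ q)) = 1 := by
    intro q hq
    rw [ip_smul_right, ip_smul_left, ip_cross_cross, hc1 q hq, hc2 q hq, hc3 q hq]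
    field_simp [hlm2ne q hq]
    simp [hlmne q hq]
  have hdNN : ∀ q ∈ U, ∀ w : ℝ × ℝ, ip (pd w (fun r => (lam r ^ 2)⁻¹ • cross (pd (1,0) φ r) (pd (0,1) φ r)) q) ((lam q ^ 2)⁻¹ • cross (pd (1,0) φ q) (pd (0,1) φ q)) = 0 := by
    intro q hq w
    have h0 : pd w (fun r => ip ((lam r ^ 2)⁻¹ • cross (pd (1,0) φ r) (pd (0,1) φ r)) ((lam r ^ 2)⁻¹ • cross (pd (1,0) φ r) (pd (0,1) φ r))) q = pd w (fun _ => (1:ℝ)) q :=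
      pd_congr_open hU hq w (fun r hr => hNN r hr)
    rw [pd_ip w (diffAt (hsN q hq)) (diffAt (hsN q hq)), pd_const] at h0
    rw [ip_comm ((lam q ^ 2)⁻¹ • cross (pd (1,0) φ q) (pd (0,1) φ q))] at h0
    linarith
  -- ## Clairaut for φ
  have hcl : ∀ q ∈ U, pd (0,1) (pd (1,0) φ) q = pd (1,0) (pd (0,1) φ) q :=
    fun q hq => pd_comm (hsφ q hq) (0,1) (1,0)
  -- ## first derivatives of the conformality relations
  have v1 : ∀ q ∈ U, ip (pd (1,0) (pd (1,0) φ) q) (pd (1,0) φ q) = lam q * pd (1,0) lam q := by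
    intro q hq
    have h0 : pd (1,0) (fun r => ip (pd (1,0) φ r) (pd (1,0) φ r)) q
        = pd (1,0) (fun r => lam r * lam r) q :=
      pd_congr_open hU hq (1,0) (fun r hr => by rw [hc1 r hr]; ring)
    rw [pd_ip (1,0) (diffAt (hsA q hq)) (diffAt (hsA q hq)),
      pd_mul (1,0) (diffAt (hslam q hq)) (diffAt (hslam q hq)),
      ip_comm (pd (1,0) φ q)] at h0
    linarith
  have v2' : ∀ q ∈ U, ip (pd (0,1) (pd (1,0) φ) q) (pd (1,0) φ q) = lam q * pd (0,1) lam q := by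
    intro q hq
    have h0 : pd (0,1) (fun r => ip (pd (1,0) φ r) (pd (1,0) φ r)) q
        = pd (0,1) (fun r => lam r * lam r) q :=
      pd_congr_open hU hq (0,1) (fun r hr => by rw [hc1 r hr]; ring)
    rw [pd_ip (0,1) (diffAt (hsA q hq)) (diffAt (hsA q hq)),
      pd_mul (0,1) (diffAt (hslam q hq)) (diffAt (hslam q hq)),
      ip_comm (pd (1,0) φ q)] at h0
    linarith
  have v2 : ∀ q ∈ U, ip (pd (1,0) (pd (0,1) φ) q) (pd (1,0) φ q) = lam q * pd (0,1) lam q := by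
    intro q hq; rw [← hcl q hq]; exact v2' q hq
  have v3 : ∀ q ∈ U, ip (pd (1,0) (pd (0,1) φ) q) (pd (0,1) φ q) = lam q * pd (1,0) lam q := by
    intro q hq
    have h0 : pd (1,0) (fun r => ip (pd (0,1) φ r) (pd (0,1) φ r)) q
        = pd (1,0) (fun r => lam r * lam r) q :=
      pd_congr_open hU hq (1,0) (fun r hr => by rw [hc2 r hr]; ring)
    rw [pd_ip (1,0) (diffAt (hsB q hq)) (diffAt (hsB q hq)),
      pd_mul (1,0) (diffAt (hslam q hq)) (diffAt (hslam q hq)),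
      ip_comm (pd (0,1) φ q)] at h0
    linarith
  have v4 : ∀ q ∈ U, ip (pd (0,1) (pd (0,1) φ) q) (pd (0,1) φ q) = lam q * pd (0,1) lam q := by
    intro q hq
    have h0 : pd (0,1) (fun r => ip (pd (0,1) φ r) (pd (0,1) φ r)) q
        = pd (0,1) (fun r => lam r * lam r) q :=
      pd_congr_open hU hq (0,1) (fun r hr => by rw [hc2 r hr]; ring)
    rw [pd_ip (0,1) (diffAt (hsB q hq)) (diffAt (hsB q hq)),
      pd_mul (0,1) (diffAt (hslam q hq)) (diffAt (hslam q hq)),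
      ip_comm (pd (0,1) φ q)] at h0
    linarith
  have v5 : ∀ q ∈ U, ip (pd (1,0) (pd (1,0) φ) q) (pd (0,1) φ q) = -(lam q * pd (0,1) lam q) := by
    intro q hq
    have h0 : pd (1,0) (fun r => ip (pd (1,0) φ r) (pd (0,1) φ r)) q
        = pd (1,0) (fun _ => (0:ℝ)) q :=
      pd_congr_open hU hq (1,0) (fun r hr => hc3 r hr)
    rw [pd_ip (1,0) (diffAt (hsA q hq)) (diffAt (hsB q hq)), pd_const] at h0
    have h1 : ip (pd (1,0) φ q) (pd (1,0) (pd (0,1) φ) q) = lam q * pd (0,1) lam q := by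
      rw [ip_comm]; exact v2 q hq
    linarith
  have v6 : ∀ q ∈ U, ip (pd (0,1) (pd (0,1) φ) q) (pd (1,0) φ q) = -(lam q * pd (1,0) lam q) := by
    intro q hq
    have h0 : pd (0,1) (fun r => ip (pd (1,0) φ r) (pd (0,1) φ r)) q
        = pd (0,1) (fun _ => (0:ℝ)) q :=
      pd_congr_open hU hq (0,1) (fun r hr => hc3 r hr)
    rw [pd_ip (0,1) (diffAt (hsA q hq)) (diffAt (hsB q hq)), pd_const, hcl q hq] at h0
    have h1 : ip (pd (1,0) (pd (0,1) φ) q) (pd (0,1) φ q) = lam q * pd (1,0) lam q := v3 q hq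
    rw [ip_comm]
    linarith
  -- ## Gauss decompositions
  have G1 : ∀ q ∈ U, pd (1,0) (pd (1,0) φ) q = (fun r => (lam r * pd (1,0) lam r / lam r ^ 2) • pd (1,0) φ r + (-(lam r * pd (0,1) lam r) / lam r ^ 2) • pd (0,1) φ r + (ip (pd (1,0) (pd (1,0) φ) r) ((lam r ^ 2)⁻¹ • cross (pd (1,0) φ r) (pd (0,1) φ r))) • ((lam r ^ 2)⁻¹ • cross (pd (1,0) φ r) (pd (0,1) φ r))) q := by
    intro q hq
    have h := frame_decomp (pd (1,0) φ q) (pd (0,1) φ q) (pd (1,0) (pd (1,0) φ) q) (lam q)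
      (hlmne q hq) (hc1 q hq) (hc2 q hq) (hc3 q hq)
    rw [v1 q hq, v5 q hq] at h
    exact h
  have G2 : ∀ q ∈ U, pd (1,0) (pd (0,1) φ) q = (fun r => (lam r * pd (0,1) lam r / lam r ^ 2) • pd (1,0) φ r + (lam r * pd (1,0) lam r / lam r ^ 2) • pd (0,1) φ r + (ip (pd (1,0) (pd (0,1) φ) r) ((lam r ^ 2)⁻¹ • cross (pd (1,0) φ r) (pd (0,1) φ r))) • ((lam r ^ 2)⁻¹ • cross (pd (1,0) φ r) (pd (0,1) φ r))) q := by
    intro q hq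
    have h := frame_decomp (pd (1,0) φ q) (pd (0,1) φ q) (pd (1,0) (pd (0,1) φ) q) (lam q)
      (hlmne q hq) (hc1 q hq) (hc2 q hq) (hc3 q hq)
    rw [v2 q hq, v3 q hq] at h
    exact h
  have G3 : ∀ q ∈ U, pd (0,1) (pd (0,1) φ) q = (fun r => (-(lam r * pd (1,0) lam r) / lam r ^ 2) • pd (1,0) φ r + (lam r * pd (0,1) lam r / lam r ^ 2) • pd (0,1) φ r + (ip (pd (0,1) (pd (0,1) φ) r) ((lam r ^ 2)⁻¹ • cross (pd (1,0) φ r) (pd (0,1) φ r))) • ((lam r ^ 2)⁻¹ • cross (pd (1,0) φ r) (pd (0,1) φ r))) q := by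
    intro q hq
    have h := frame_decomp (pd (1,0) φ q) (pd (0,1) φ q) (pd (0,1) (pd (0,1) φ) q) (lam q)
      (hlmne q hq) (hc1 q hq) (hc2 q hq) (hc3 q hq)
    rw [v6 q hq, v4 q hq] at h
    exact h

  -- ## scaled mean curvature
  have hE : ∀ q ∈ U, ip (pd (1,0) (pd (1,0) φ) q) ((lam q ^ 2)⁻¹ • cross (pd (1,0) φ q) (pd (0,1) φ q)) + ip (pd (0,1) (pd (0,1) φ) q) ((lam q ^ 2)⁻¹ • cross (pd (1,0) φ q) (pd (0,1) φ q)) = 2 * (lam q * (lam q * ((ip (pd (1,0) (pd (1,0) φ) q) ((lam q ^ 2)⁻¹ • cross (pd (1,0) φ q) (pd (0,1) φ q)) + ip (pd (0,1) (pd (0,1) φ) q) ((lam q ^ 2)⁻¹ • cross (pd (1,0) φ q) (pd (0,1) φ q))) / (2 * lam q ^ 2)))) := by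
    intro q hq
    generalize (ip (pd (1,0) (pd (1,0) φ) q) ((lam q ^ 2)⁻¹ • cross (pd (1,0) φ q) (pd (0,1) φ q)) + ip (pd (0,1) (pd (0,1) φ) q) ((lam q ^ 2)⁻¹ • cross (pd (1,0) φ q) (pd (0,1) φ q))) = X
    field_simp
    rw [mul_div_assoc, div_self (hlmne q hq)]
    ring
  -- ## Codazzi equations
  have K1 : ∀ q ∈ U, pd (0,1) (fun r => ip (pd (1,0) (pd (1,0) φ) r) ((lam r ^ 2)⁻¹ • cross (pd (1,0) φ r) (pd (0,1) φ r))) q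
      = pd (1,0) (fun r => ip (pd (1,0) (pd (0,1) φ) r) ((lam r ^ 2)⁻¹ • cross (pd (1,0) φ r) (pd (0,1) φ r))) q + 2 * (lam q * (pd (0,1) lam q * ((ip (pd (1,0) (pd (1,0) φ) q) ((lam q ^ 2)⁻¹ • cross (pd (1,0) φ q) (pd (0,1) φ q)) + ip (pd (0,1) (pd (0,1) φ) q) ((lam q ^ 2)⁻¹ • cross (pd (1,0) φ q) (pd (0,1) φ q))) / (2 * lam q ^ 2)))) := by
    intro q hq
    have dL := diffAt (hslam q hq)
    have dLu := diffAt (hslamu q hq)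
    have dLv := diffAt (hslamv q hq)
    have dA := diffAt (hsA q hq)
    have dB := diffAt (hsB q hq)
    have dN := diffAt (hsN q hq)
    have dE := diffAt (hse q hq)
    have dF := diffAt (hsf q hq)
    have dc1 : DifferentiableAt ℝ (fun r => lam r * pd (1,0) lam r / lam r ^ 2) q :=
      diffAt (((hslam q hq).mul (hslamu q hq)).div ((hslam q hq).pow 2) (hlm2ne q hq))
    have dc2 : DifferentiableAt ℝ (fun r => lam r * pd (0,1) lam r / lam r ^ 2) q :=
      diffAt (((hslam q hq).mul (hslamv q hq)).div ((hslam q hq).pow 2) (hlm2ne q hq))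
    have dnc2 : DifferentiableAt ℝ (fun r => -(lam r * pd (0,1) lam r) / lam r ^ 2) q :=
      diffAt ((((hslam q hq).mul (hslamv q hq)).neg).div ((hslam q hq).pow 2) (hlm2ne q hq))
    have hA1 : pd (0,1) (pd (1,0) (pd (1,0) φ)) q = pd (1,0) (pd (1,0) (pd (0,1) φ)) q := by
      rw [pd_comm (hsA q hq) (0,1) (1,0)]
      exact pd_congr_open hU hq (1,0) hcl
    have e1 : ip (pd (0,1) (pd (1,0) (pd (1,0) φ)) q) ((lam q ^ 2)⁻¹ • cross (pd (1,0) φ q) (pd (0,1) φ q))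
        = (lam q * pd (1,0) lam q / lam q ^ 2) * (ip (pd (1,0) (pd (0,1) φ) q) ((lam q ^ 2)⁻¹ • cross (pd (1,0) φ q) (pd (0,1) φ q))) + (-(lam q * pd (0,1) lam q) / lam q ^ 2) * (ip (pd (0,1) (pd (0,1) φ) q) ((lam q ^ 2)⁻¹ • cross (pd (1,0) φ q) (pd (0,1) φ q))) + pd (0,1) (fun r => ip (pd (1,0) (pd (1,0) φ) r) ((lam r ^ 2)⁻¹ • cross (pd (1,0) φ r) (pd (0,1) φ r))) q := by
      rw [pd_congr_open hU hq (0,1) G1,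
        pd_add (0,1) ((dc1.fun_smul dA).fun_add (dnc2.fun_smul dB)) (dE.fun_smul dN),
        pd_add (0,1) (dc1.fun_smul dA) (dnc2.fun_smul dB),
        pd_smul (0,1) dc1 dA, pd_smul (0,1) dnc2 dB, pd_smul (0,1) dE dN]
      rw [hcl q hq]
      rw [ip_add_left, ip_add_left, ip_add_left, ip_add_left, ip_add_left]
      rw [ip_smul_left (pd (0,1) (fun r => lam r * pd (1,0) lam r / lam r ^ 2) q),
          ip_smul_left ((fun r => lam r * pd (1,0) lam r / lam r ^ 2) q),
          ip_smul_left (pd (0,1) (fun r => -(lam r * pd (0,1) lam r) / lam r ^ 2) q),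
          ip_smul_left ((fun r => -(lam r * pd (0,1) lam r) / lam r ^ 2) q),
          ip_smul_left (pd (0,1) (fun r => ip (pd (1,0) (pd (1,0) φ) r) ((lam r ^ 2)⁻¹ • cross (pd (1,0) φ r) (pd (0,1) φ r))) q),
          ip_smul_left ((fun r => ip (pd (1,0) (pd (1,0) φ) r) ((lam r ^ 2)⁻¹ • cross (pd (1,0) φ r) (pd (0,1) φ r))) q)]
      rw [hAN q hq, hBN q hq, hNN q hq, hdNN q hq (0,1)]
      beta_reduce
      ring
    have e2 : ip (pd (1,0) (pd (1,0) (pd (0,1) φ)) q) ((lam q ^ 2)⁻¹ • cross (pd (1,0) φ q) (pd (0,1) φ q))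
        = (lam q * pd (0,1) lam q / lam q ^ 2) * (ip (pd (1,0) (pd (1,0) φ) q) ((lam q ^ 2)⁻¹ • cross (pd (1,0) φ q) (pd (0,1) φ q))) + (lam q * pd (1,0) lam q / lam q ^ 2) * (ip (pd (1,0) (pd (0,1) φ) q) ((lam q ^ 2)⁻¹ • cross (pd (1,0) φ q) (pd (0,1) φ q))) + pd (1,0) (fun r => ip (pd (1,0) (pd (0,1) φ) r) ((lam r ^ 2)⁻¹ • cross (pd (1,0) φ r) (pd (0,1) φ r))) q := by
      rw [pd_congr_open hU hq (1,0) G2,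
        pd_add (1,0) ((dc2.fun_smul dA).fun_add (dc1.fun_smul dB)) (dF.fun_smul dN),
        pd_add (1,0) (dc2.fun_smul dA) (dc1.fun_smul dB),
        pd_smul (1,0) dc2 dA, pd_smul (1,0) dc1 dB, pd_smul (1,0) dF dN]
      rw [ip_add_left, ip_add_left, ip_add_left, ip_add_left, ip_add_left]
      rw [ip_smul_left (pd (1,0) (fun r => lam r * pd (0,1) lam r / lam r ^ 2) q),
          ip_smul_left ((fun r => lam r * pd (0,1) lam r / lam r ^ 2) q),
          ip_smul_left (pd (1,0) (fun r => lam r * pd (1,0) lam r / lam r ^ 2) q),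
          ip_smul_left ((fun r => lam r * pd (1,0) lam r / lam r ^ 2) q),
          ip_smul_left (pd (1,0) (fun r => ip (pd (1,0) (pd (0,1) φ) r) ((lam r ^ 2)⁻¹ • cross (pd (1,0) φ r) (pd (0,1) φ r))) q),
          ip_smul_left ((fun r => ip (pd (1,0) (pd (0,1) φ) r) ((lam r ^ 2)⁻¹ • cross (pd (1,0) φ r) (pd (0,1) φ r))) q)]
      rw [hAN q hq, hBN q hq, hNN q hq, hdNN q hq (1,0)]
      beta_reduce
      ring
    have e3 : (lam q * pd (1,0) lam q / lam q ^ 2) * (ip (pd (1,0) (pd (0,1) φ) q) ((lam q ^ 2)⁻¹ • cross (pd (1,0) φ q) (pd (0,1) φ q))) + (-(lam q * pd (0,1) lam q) / lam q ^ 2) * (ip (pd (0,1) (pd (0,1) φ) q) ((lam q ^ 2)⁻¹ • cross (pd (1,0) φ q) (pd (0,1) φ q))) + pd (0,1) (fun r => ip (pd (1,0) (pd (1,0) φ) r) ((lam r ^ 2)⁻¹ • cross (pd (1,0) φ r) (pd (0,1) φ r))) q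
        = (lam q * pd (0,1) lam q / lam q ^ 2) * (ip (pd (1,0) (pd (1,0) φ) q) ((lam q ^ 2)⁻¹ • cross (pd (1,0) φ q) (pd (0,1) φ q))) + (lam q * pd (1,0) lam q / lam q ^ 2) * (ip (pd (1,0) (pd (0,1) φ) q) ((lam q ^ 2)⁻¹ • cross (pd (1,0) φ q) (pd (0,1) φ q))) + pd (1,0) (fun r => ip (pd (1,0) (pd (0,1) φ) r) ((lam r ^ 2)⁻¹ • cross (pd (1,0) φ r) (pd (0,1) φ r))) q := by
      rw [← e1, ← e2, hA1]
    linear_combination e3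
  have K2 : ∀ q ∈ U, pd (1,0) (fun r => ip (pd (0,1) (pd (0,1) φ) r) ((lam r ^ 2)⁻¹ • cross (pd (1,0) φ r) (pd (0,1) φ r))) q
      = pd (0,1) (fun r => ip (pd (1,0) (pd (0,1) φ) r) ((lam r ^ 2)⁻¹ • cross (pd (1,0) φ r) (pd (0,1) φ r))) q + 2 * (lam q * (pd (1,0) lam q * ((ip (pd (1,0) (pd (1,0) φ) q) ((lam q ^ 2)⁻¹ • cross (pd (1,0) φ q) (pd (0,1) φ q)) + ip (pd (0,1) (pd (0,1) φ) q) ((lam q ^ 2)⁻¹ • cross (pd (1,0) φ q) (pd (0,1) φ q))) / (2 * lam q ^ 2)))) := by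
    intro q hq
    have dL := diffAt (hslam q hq)
    have dLu := diffAt (hslamu q hq)
    have dLv := diffAt (hslamv q hq)
    have dA := diffAt (hsA q hq)
    have dB := diffAt (hsB q hq)
    have dN := diffAt (hsN q hq)
    have dG := diffAt (hsg q hq)
    have dF := diffAt (hsf q hq)
    have dc1 : DifferentiableAt ℝ (fun r => lam r * pd (1,0) lam r / lam r ^ 2) q :=
      diffAt (((hslam q hq).mul (hslamu q hq)).div ((hslam q hq).pow 2) (hlm2ne q hq))
    have dc2 : DifferentiableAt ℝ (fun r => lam r * pd (0,1) lam r / lam r ^ 2) q :=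
      diffAt (((hslam q hq).mul (hslamv q hq)).div ((hslam q hq).pow 2) (hlm2ne q hq))
    have dnc1 : DifferentiableAt ℝ (fun r => -(lam r * pd (1,0) lam r) / lam r ^ 2) q :=
      diffAt ((((hslam q hq).mul (hslamu q hq)).neg).div ((hslam q hq).pow 2) (hlm2ne q hq))
    have hA2 : pd (1,0) (pd (0,1) (pd (0,1) φ)) q = pd (0,1) (pd (1,0) (pd (0,1) φ)) q :=
      pd_comm (hsB q hq) (1,0) (0,1)
    have e1 : ip (pd (1,0) (pd (0,1) (pd (0,1) φ)) q) ((lam q ^ 2)⁻¹ • cross (pd (1,0) φ q) (pd (0,1) φ q))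
        = (-(lam q * pd (1,0) lam q) / lam q ^ 2) * (ip (pd (1,0) (pd (1,0) φ) q) ((lam q ^ 2)⁻¹ • cross (pd (1,0) φ q) (pd (0,1) φ q))) + (lam q * pd (0,1) lam q / lam q ^ 2) * (ip (pd (1,0) (pd (0,1) φ) q) ((lam q ^ 2)⁻¹ • cross (pd (1,0) φ q) (pd (0,1) φ q))) + pd (1,0) (fun r => ip (pd (0,1) (pd (0,1) φ) r) ((lam r ^ 2)⁻¹ • cross (pd (1,0) φ r) (pd (0,1) φ r))) q := by
      rw [pd_congr_open hU hq (1,0) G3,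
        pd_add (1,0) ((dnc1.fun_smul dA).fun_add (dc2.fun_smul dB)) (dG.fun_smul dN),
        pd_add (1,0) (dnc1.fun_smul dA) (dc2.fun_smul dB),
        pd_smul (1,0) dnc1 dA, pd_smul (1,0) dc2 dB, pd_smul (1,0) dG dN]
      rw [ip_add_left, ip_add_left, ip_add_left, ip_add_left, ip_add_left]
      rw [ip_smul_left (pd (1,0) (fun r => -(lam r * pd (1,0) lam r) / lam r ^ 2) q),
          ip_smul_left ((fun r => -(lam r * pd (1,0) lam r) / lam r ^ 2) q),
          ip_smul_left (pd (1,0) (fun r => lam r * pd (0,1) lam r / lam r ^ 2) q),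
          ip_smul_left ((fun r => lam r * pd (0,1) lam r / lam r ^ 2) q),
          ip_smul_left (pd (1,0) (fun r => ip (pd (0,1) (pd (0,1) φ) r) ((lam r ^ 2)⁻¹ • cross (pd (1,0) φ r) (pd (0,1) φ r))) q),
          ip_smul_left ((fun r => ip (pd (0,1) (pd (0,1) φ) r) ((lam r ^ 2)⁻¹ • cross (pd (1,0) φ r) (pd (0,1) φ r))) q)]
      rw [hAN q hq, hBN q hq, hNN q hq, hdNN q hq (1,0)]
      beta_reduce
      ring
    have e2 : ip (pd (0,1) (pd (1,0) (pd (0,1) φ)) q) ((lam q ^ 2)⁻¹ • cross (pd (1,0) φ q) (pd (0,1) φ q))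
        = (lam q * pd (0,1) lam q / lam q ^ 2) * (ip (pd (1,0) (pd (0,1) φ) q) ((lam q ^ 2)⁻¹ • cross (pd (1,0) φ q) (pd (0,1) φ q))) + (lam q * pd (1,0) lam q / lam q ^ 2) * (ip (pd (0,1) (pd (0,1) φ) q) ((lam q ^ 2)⁻¹ • cross (pd (1,0) φ q) (pd (0,1) φ q))) + pd (0,1) (fun r => ip (pd (1,0) (pd (0,1) φ) r) ((lam r ^ 2)⁻¹ • cross (pd (1,0) φ r) (pd (0,1) φ r))) q := by
      rw [pd_congr_open hU hq (0,1) G2,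
        pd_add (0,1) ((dc2.fun_smul dA).fun_add (dc1.fun_smul dB)) (dF.fun_smul dN),
        pd_add (0,1) (dc2.fun_smul dA) (dc1.fun_smul dB),
        pd_smul (0,1) dc2 dA, pd_smul (0,1) dc1 dB, pd_smul (0,1) dF dN]
      rw [hcl q hq]
      rw [ip_add_left, ip_add_left, ip_add_left, ip_add_left, ip_add_left]
      rw [ip_smul_left (pd (0,1) (fun r => lam r * pd (0,1) lam r / lam r ^ 2) q),
          ip_smul_left ((fun r => lam r * pd (0,1) lam r / lam r ^ 2) q),
          ip_smul_left (pd (0,1) (fun r => lam r * pd (1,0) lam r / lam r ^ 2) q),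
          ip_smul_left ((fun r => lam r * pd (1,0) lam r / lam r ^ 2) q),
          ip_smul_left (pd (0,1) (fun r => ip (pd (1,0) (pd (0,1) φ) r) ((lam r ^ 2)⁻¹ • cross (pd (1,0) φ r) (pd (0,1) φ r))) q),
          ip_smul_left ((fun r => ip (pd (1,0) (pd (0,1) φ) r) ((lam r ^ 2)⁻¹ • cross (pd (1,0) φ r) (pd (0,1) φ r))) q)]
      rw [hAN q hq, hBN q hq, hNN q hq, hdNN q hq (0,1)]
      beta_reduce
      ring
    have e3 : (-(lam q * pd (1,0) lam q) / lam q ^ 2) * (ip (pd (1,0) (pd (1,0) φ) q) ((lam q ^ 2)⁻¹ • cross (pd (1,0) φ q) (pd (0,1) φ q))) + (lam q * pd (0,1) lam q / lam q ^ 2) * (ip (pd (1,0) (pd (0,1) φ) q) ((lam q ^ 2)⁻¹ • cross (pd (1,0) φ q) (pd (0,1) φ q))) + pd (1,0) (fun r => ip (pd (0,1) (pd (0,1) φ) r) ((lam r ^ 2)⁻¹ • cross (pd (1,0) φ r) (pd (0,1) φ r))) q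
        = (lam q * pd (0,1) lam q / lam q ^ 2) * (ip (pd (1,0) (pd (0,1) φ) q) ((lam q ^ 2)⁻¹ • cross (pd (1,0) φ q) (pd (0,1) φ q))) + (lam q * pd (1,0) lam q / lam q ^ 2) * (ip (pd (0,1) (pd (0,1) φ) q) ((lam q ^ 2)⁻¹ • cross (pd (1,0) φ q) (pd (0,1) φ q))) + pd (0,1) (fun r => ip (pd (1,0) (pd (0,1) φ) r) ((lam r ^ 2)⁻¹ • cross (pd (1,0) φ r) (pd (0,1) φ r))) q := by
      rw [← e1, ← e2, hA2]
    linear_combination e3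
  -- ## first derivatives of e+g = 2 λ² H
  have Eu : ∀ q ∈ U, pd (1,0) (fun r => ip (pd (1,0) (pd (1,0) φ) r) ((lam r ^ 2)⁻¹ • cross (pd (1,0) φ r) (pd (0,1) φ r))) q + pd (1,0) (fun r => ip (pd (0,1) (pd (0,1) φ) r) ((lam r ^ 2)⁻¹ • cross (pd (1,0) φ r) (pd (0,1) φ r))) q
      = 2 * (pd (1,0) lam q * (lam q * ((ip (pd (1,0) (pd (1,0) φ) q) ((lam q ^ 2)⁻¹ • cross (pd (1,0) φ q) (pd (0,1) φ q)) + ip (pd (0,1) (pd (0,1) φ) q) ((lam q ^ 2)⁻¹ • cross (pd (1,0) φ q) (pd (0,1) φ q))) / (2 * lam q ^ 2)))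
          + lam q * (pd (1,0) lam q * ((ip (pd (1,0) (pd (1,0) φ) q) ((lam q ^ 2)⁻¹ • cross (pd (1,0) φ q) (pd (0,1) φ q)) + ip (pd (0,1) (pd (0,1) φ) q) ((lam q ^ 2)⁻¹ • cross (pd (1,0) φ q) (pd (0,1) φ q))) / (2 * lam q ^ 2)) + lam q * pd (1,0) (fun r => ((ip (pd (1,0) (pd (1,0) φ) r) ((lam r ^ 2)⁻¹ • cross (pd (1,0) φ r) (pd (0,1) φ r)) + ip (pd (0,1) (pd (0,1) φ) r) ((lam r ^ 2)⁻¹ • cross (pd (1,0) φ r) (pd (0,1) φ r))) / (2 * lam r ^ 2))) q)) := by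
    intro q hq
    have dL := diffAt (hslam q hq)
    have dE := diffAt (hse q hq)
    have dG := diffAt (hsg q hq)
    have dH := diffAt (hsH q hq)
    have h0 : pd (1,0) (fun r => ip (pd (1,0) (pd (1,0) φ) r) ((lam r ^ 2)⁻¹ • cross (pd (1,0) φ r) (pd (0,1) φ r)) + ip (pd (0,1) (pd (0,1) φ) r) ((lam r ^ 2)⁻¹ • cross (pd (1,0) φ r) (pd (0,1) φ r))) q
        = pd (1,0) (fun r => 2 * (lam r * (lam r * ((ip (pd (1,0) (pd (1,0) φ) r) ((lam r ^ 2)⁻¹ • cross (pd (1,0) φ r) (pd (0,1) φ r)) + ip (pd (0,1) (pd (0,1) φ) r) ((lam r ^ 2)⁻¹ • cross (pd (1,0) φ r) (pd (0,1) φ r))) / (2 * lam r ^ 2))))) q :=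
      pd_congr_open hU hq (1,0) hE
    rw [pd_add (1,0) dE dG, pd_cst_mul (1,0) 2 (dL.fun_mul (dL.fun_mul dH)),
        pd_mul (1,0) dL (dL.fun_mul dH), pd_mul (1,0) dL dH] at h0
    exact h0
  have Ev : ∀ q ∈ U, pd (0,1) (fun r => ip (pd (1,0) (pd (1,0) φ) r) ((lam r ^ 2)⁻¹ • cross (pd (1,0) φ r) (pd (0,1) φ r))) q + pd (0,1) (fun r => ip (pd (0,1) (pd (0,1) φ) r) ((lam r ^ 2)⁻¹ • cross (pd (1,0) φ r) (pd (0,1) φ r))) q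
      = 2 * (pd (0,1) lam q * (lam q * ((ip (pd (1,0) (pd (1,0) φ) q) ((lam q ^ 2)⁻¹ • cross (pd (1,0) φ q) (pd (0,1) φ q)) + ip (pd (0,1) (pd (0,1) φ) q) ((lam q ^ 2)⁻¹ • cross (pd (1,0) φ q) (pd (0,1) φ q))) / (2 * lam q ^ 2)))
          + lam q * (pd (0,1) lam q * ((ip (pd (1,0) (pd (1,0) φ) q) ((lam q ^ 2)⁻¹ • cross (pd (1,0) φ q) (pd (0,1) φ q)) + ip (pd (0,1) (pd (0,1) φ) q) ((lam q ^ 2)⁻¹ • cross (pd (1,0) φ q) (pd (0,1) φ q))) / (2 * lam q ^ 2)) + lam q * pd (0,1) (fun r => ((ip (pd (1,0) (pd (1,0) φ) r) ((lam r ^ 2)⁻¹ • cross (pd (1,0) φ r) (pd (0,1) φ r)) + ip (pd (0,1) (pd (0,1) φ) r) ((lam r ^ 2)⁻¹ • cross (pd (1,0) φ r) (pd (0,1) φ r))) / (2 * lam r ^ 2))) q)) := by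
    intro q hq
    have dL := diffAt (hslam q hq)
    have dE := diffAt (hse q hq)
    have dG := diffAt (hsg q hq)
    have dH := diffAt (hsH q hq)
    have h0 : pd (0,1) (fun r => ip (pd (1,0) (pd (1,0) φ) r) ((lam r ^ 2)⁻¹ • cross (pd (1,0) φ r) (pd (0,1) φ r)) + ip (pd (0,1) (pd (0,1) φ) r) ((lam r ^ 2)⁻¹ • cross (pd (1,0) φ r) (pd (0,1) φ r))) q
        = pd (0,1) (fun r => 2 * (lam r * (lam r * ((ip (pd (1,0) (pd (1,0) φ) r) ((lam r ^ 2)⁻¹ • cross (pd (1,0) φ r) (pd (0,1) φ r)) + ip (pd (0,1) (pd (0,1) φ) r) ((lam r ^ 2)⁻¹ • cross (pd (1,0) φ r) (pd (0,1) φ r))) / (2 * lam r ^ 2))))) q :=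
      pd_congr_open hU hq (0,1) hE
    rw [pd_add (0,1) dE dG, pd_cst_mul (0,1) 2 (dL.fun_mul (dL.fun_mul dH)),
        pd_mul (0,1) dL (dL.fun_mul dH), pd_mul (0,1) dL dH] at h0
    exact h0
  -- ## second-level derivative facts at p
  have dLp := diffAt (hslam p hp)
  have dLup := diffAt (hslamu p hp)
  have dLvp := diffAt (hslamv p hp)
  have dHp := diffAt (hsH p hp)
  have dHup : DifferentiableAt ℝ (pd (1,0) (fun r => ((ip (pd (1,0) (pd (1,0) φ) r) ((lam r ^ 2)⁻¹ • cross (pd (1,0) φ r) (pd (0,1) φ r)) + ip (pd (0,1) (pd (0,1) φ) r) ((lam r ^ 2)⁻¹ • cross (pd (1,0) φ r) (pd (0,1) φ r))) / (2 * lam r ^ 2)))) p := diffAt (contDiffAt_pd (1,0) (hsH p hp))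
  have dHvp : DifferentiableAt ℝ (pd (0,1) (fun r => ((ip (pd (1,0) (pd (1,0) φ) r) ((lam r ^ 2)⁻¹ • cross (pd (1,0) φ r) (pd (0,1) φ r)) + ip (pd (0,1) (pd (0,1) φ) r) ((lam r ^ 2)⁻¹ • cross (pd (1,0) φ r) (pd (0,1) φ r))) / (2 * lam r ^ 2)))) p := diffAt (contDiffAt_pd (0,1) (hsH p hp))
  have dFup : DifferentiableAt ℝ (pd (1,0) (fun r => ip (pd (1,0) (pd (0,1) φ) r) ((lam r ^ 2)⁻¹ • cross (pd (1,0) φ r) (pd (0,1) φ r)))) p := diffAt (contDiffAt_pd (1,0) (hsf p hp))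
  have dFvp : DifferentiableAt ℝ (pd (0,1) (fun r => ip (pd (1,0) (pd (0,1) φ) r) ((lam r ^ 2)⁻¹ • cross (pd (1,0) φ r) (pd (0,1) φ r)))) p := diffAt (contDiffAt_pd (0,1) (hsf p hp))
  have K1u := pd_congr_open hU hp (1,0) K1
  rw [pd_add (1,0) dFup ((dLp.fun_mul (dLvp.fun_mul dHp)).const_mul 2),
      pd_cst_mul (1,0) 2 (dLp.fun_mul (dLvp.fun_mul dHp)),
      pd_mul (1,0) dLp (dLvp.fun_mul dHp), pd_mul (1,0) dLvp dHp] at K1u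
  have K1v := pd_congr_open hU hp (0,1) K1
  rw [pd_add (0,1) dFup ((dLp.fun_mul (dLvp.fun_mul dHp)).const_mul 2),
      pd_cst_mul (0,1) 2 (dLp.fun_mul (dLvp.fun_mul dHp)),
      pd_mul (0,1) dLp (dLvp.fun_mul dHp), pd_mul (0,1) dLvp dHp] at K1v
  have K2u := pd_congr_open hU hp (1,0) K2
  rw [pd_add (1,0) dFvp ((dLp.fun_mul (dLup.fun_mul dHp)).const_mul 2),
      pd_cst_mul (1,0) 2 (dLp.fun_mul (dLup.fun_mul dHp)),
      pd_mul (1,0) dLp (dLup.fun_mul dHp), pd_mul (1,0) dLup dHp] at K2u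
  have K2v := pd_congr_open hU hp (0,1) K2
  rw [pd_add (0,1) dFvp ((dLp.fun_mul (dLup.fun_mul dHp)).const_mul 2),
      pd_cst_mul (0,1) 2 (dLp.fun_mul (dLup.fun_mul dHp)),
      pd_mul (0,1) dLp (dLup.fun_mul dHp), pd_mul (0,1) dLup dHp] at K2v
  have dEup : DifferentiableAt ℝ (pd (1,0) (fun r => ip (pd (1,0) (pd (1,0) φ) r) ((lam r ^ 2)⁻¹ • cross (pd (1,0) φ r) (pd (0,1) φ r)))) p := diffAt (contDiffAt_pd (1,0) (hse p hp))
  have dEvp : DifferentiableAt ℝ (pd (0,1) (fun r => ip (pd (1,0) (pd (1,0) φ) r) ((lam r ^ 2)⁻¹ • cross (pd (1,0) φ r) (pd (0,1) φ r)))) p := diffAt (contDiffAt_pd (0,1) (hse p hp))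
  have dGup : DifferentiableAt ℝ (pd (1,0) (fun r => ip (pd (0,1) (pd (0,1) φ) r) ((lam r ^ 2)⁻¹ • cross (pd (1,0) φ r) (pd (0,1) φ r)))) p := diffAt (contDiffAt_pd (1,0) (hsg p hp))
  have dGvp : DifferentiableAt ℝ (pd (0,1) (fun r => ip (pd (0,1) (pd (0,1) φ) r) ((lam r ^ 2)⁻¹ • cross (pd (1,0) φ r) (pd (0,1) φ r)))) p := diffAt (contDiffAt_pd (0,1) (hsg p hp))
  have Euu := pd_congr_open hU hp (1,0) Eu
  rw [pd_add (1,0) dEup dGup,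
      pd_cst_mul (1,0) 2 ((dLup.fun_mul (dLp.fun_mul dHp)).fun_add (dLp.fun_mul ((dLup.fun_mul dHp).fun_add (dLp.fun_mul dHup)))),
      pd_add (1,0) (dLup.fun_mul (dLp.fun_mul dHp)) (dLp.fun_mul ((dLup.fun_mul dHp).fun_add (dLp.fun_mul dHup))),
      pd_mul (1,0) dLup (dLp.fun_mul dHp), pd_mul (1,0) dLp dHp,
      pd_mul (1,0) dLp ((dLup.fun_mul dHp).fun_add (dLp.fun_mul dHup)),
      pd_add (1,0) (dLup.fun_mul dHp) (dLp.fun_mul dHup),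
      pd_mul (1,0) dLup dHp, pd_mul (1,0) dLp dHup] at Euu
  have Evv := pd_congr_open hU hp (0,1) Ev
  rw [pd_add (0,1) dEvp dGvp,
      pd_cst_mul (0,1) 2 ((dLvp.fun_mul (dLp.fun_mul dHp)).fun_add (dLp.fun_mul ((dLvp.fun_mul dHp).fun_add (dLp.fun_mul dHvp)))),
      pd_add (0,1) (dLvp.fun_mul (dLp.fun_mul dHp)) (dLp.fun_mul ((dLvp.fun_mul dHp).fun_add (dLp.fun_mul dHvp))),
      pd_mul (0,1) dLvp (dLp.fun_mul dHp), pd_mul (0,1) dLp dHp,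
      pd_mul (0,1) dLp ((dLvp.fun_mul dHp).fun_add (dLp.fun_mul dHvp)),
      pd_add (0,1) (dLvp.fun_mul dHp) (dLp.fun_mul dHvp),
      pd_mul (0,1) dLvp dHp, pd_mul (0,1) dLp dHvp] at Evv
  have Evu := pd_congr_open hU hp (1,0) Ev
  rw [pd_add (1,0) dEvp dGvp,
      pd_cst_mul (1,0) 2 ((dLvp.fun_mul (dLp.fun_mul dHp)).fun_add (dLp.fun_mul ((dLvp.fun_mul dHp).fun_add (dLp.fun_mul dHvp)))),
      pd_add (1,0) (dLvp.fun_mul (dLp.fun_mul dHp)) (dLp.fun_mul ((dLvp.fun_mul dHp).fun_add (dLp.fun_mul dHvp))),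
      pd_mul (1,0) dLvp (dLp.fun_mul dHp), pd_mul (1,0) dLp dHp,
      pd_mul (1,0) dLp ((dLvp.fun_mul dHp).fun_add (dLp.fun_mul dHvp)),
      pd_add (1,0) (dLvp.fun_mul dHp) (dLp.fun_mul dHvp),
      pd_mul (1,0) dLvp dHp, pd_mul (1,0) dLp dHvp] at Evu
  -- ## symmetry of second derivatives at p
  have cf : pd (1,0) (pd (0,1) (fun r => ip (pd (1,0) (pd (0,1) φ) r) ((lam r ^ 2)⁻¹ • cross (pd (1,0) φ r) (pd (0,1) φ r)))) p = pd (0,1) (pd (1,0) (fun r => ip (pd (1,0) (pd (0,1) φ) r) ((lam r ^ 2)⁻¹ • cross (pd (1,0) φ r) (pd (0,1) φ r)))) p :=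
    pd_comm (hsf p hp) (1,0) (0,1)
  have cg : pd (1,0) (pd (0,1) (fun r => ip (pd (0,1) (pd (0,1) φ) r) ((lam r ^ 2)⁻¹ • cross (pd (1,0) φ r) (pd (0,1) φ r)))) p = pd (0,1) (pd (1,0) (fun r => ip (pd (0,1) (pd (0,1) φ) r) ((lam r ^ 2)⁻¹ • cross (pd (1,0) φ r) (pd (0,1) φ r)))) p :=
    pd_comm (hsg p hp) (1,0) (0,1)
  have clam : pd (1,0) (pd (0,1) lam) p = pd (0,1) (pd (1,0) lam) p :=
    pd_comm (hslam p hp) (1,0) (0,1)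
  have cH : pd (1,0) (pd (0,1) (fun r => ((ip (pd (1,0) (pd (1,0) φ) r) ((lam r ^ 2)⁻¹ • cross (pd (1,0) φ r) (pd (0,1) φ r)) + ip (pd (0,1) (pd (0,1) φ) r) ((lam r ^ 2)⁻¹ • cross (pd (1,0) φ r) (pd (0,1) φ r))) / (2 * lam r ^ 2)))) p = pd (0,1) (pd (1,0) (fun r => ((ip (pd (1,0) (pd (1,0) φ) r) ((lam r ^ 2)⁻¹ • cross (pd (1,0) φ r) (pd (0,1) φ r)) + ip (pd (0,1) (pd (0,1) φ) r) ((lam r ^ 2)⁻¹ • cross (pd (1,0) φ r) (pd (0,1) φ r))) / (2 * lam r ^ 2)))) p :=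
    pd_comm (hsH p hp) (1,0) (0,1)
  -- ## the two real identities
  have hre : pd (1,0) (pd (1,0) (fun r => ip (pd (1,0) (pd (1,0) φ) r) ((lam r ^ 2)⁻¹ • cross (pd (1,0) φ r) (pd (0,1) φ r)))) p + pd (0,1) (pd (0,1) (fun r => ip (pd (1,0) (pd (1,0) φ) r) ((lam r ^ 2)⁻¹ • cross (pd (1,0) φ r) (pd (0,1) φ r)))) p
        - pd (1,0) (pd (1,0) (fun r => ip (pd (0,1) (pd (0,1) φ) r) ((lam r ^ 2)⁻¹ • cross (pd (1,0) φ r) (pd (0,1) φ r)))) p - pd (0,1) (pd (0,1) (fun r => ip (pd (0,1) (pd (0,1) φ) r) ((lam r ^ 2)⁻¹ • cross (pd (1,0) φ r) (pd (0,1) φ r)))) p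
      = 4 * (lam p * (pd (1,0) lam p * pd (1,0) (fun r => ((ip (pd (1,0) (pd (1,0) φ) r) ((lam r ^ 2)⁻¹ • cross (pd (1,0) φ r) (pd (0,1) φ r)) + ip (pd (0,1) (pd (0,1) φ) r) ((lam r ^ 2)⁻¹ • cross (pd (1,0) φ r) (pd (0,1) φ r))) / (2 * lam r ^ 2))) p - pd (0,1) lam p * pd (0,1) (fun r => ((ip (pd (1,0) (pd (1,0) φ) r) ((lam r ^ 2)⁻¹ • cross (pd (1,0) φ r) (pd (0,1) φ r)) + ip (pd (0,1) (pd (0,1) φ) r) ((lam r ^ 2)⁻¹ • cross (pd (1,0) φ r) (pd (0,1) φ r))) / (2 * lam r ^ 2))) p))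
        + 2 * lam p ^ 2 * (pd (1,0) (pd (1,0) (fun r => ((ip (pd (1,0) (pd (1,0) φ) r) ((lam r ^ 2)⁻¹ • cross (pd (1,0) φ r) (pd (0,1) φ r)) + ip (pd (0,1) (pd (0,1) φ) r) ((lam r ^ 2)⁻¹ • cross (pd (1,0) φ r) (pd (0,1) φ r))) / (2 * lam r ^ 2)))) p - pd (0,1) (pd (0,1) (fun r => ((ip (pd (1,0) (pd (1,0) φ) r) ((lam r ^ 2)⁻¹ • cross (pd (1,0) φ r) (pd (0,1) φ r)) + ip (pd (0,1) (pd (0,1) φ) r) ((lam r ^ 2)⁻¹ • cross (pd (1,0) φ r) (pd (0,1) φ r))) / (2 * lam r ^ 2)))) p) := by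
    linear_combination Euu - Evv + 2 * K1v - 2 * K2u - 2 * cf
  have him : pd (1,0) (pd (1,0) (fun r => ip (pd (1,0) (pd (0,1) φ) r) ((lam r ^ 2)⁻¹ • cross (pd (1,0) φ r) (pd (0,1) φ r)))) p + pd (0,1) (pd (0,1) (fun r => ip (pd (1,0) (pd (0,1) φ) r) ((lam r ^ 2)⁻¹ • cross (pd (1,0) φ r) (pd (0,1) φ r)))) p
      = 2 * lam p * (pd (1,0) lam p * pd (0,1) (fun r => ((ip (pd (1,0) (pd (1,0) φ) r) ((lam r ^ 2)⁻¹ • cross (pd (1,0) φ r) (pd (0,1) φ r)) + ip (pd (0,1) (pd (0,1) φ) r) ((lam r ^ 2)⁻¹ • cross (pd (1,0) φ r) (pd (0,1) φ r))) / (2 * lam r ^ 2))) p + pd (0,1) lam p * pd (1,0) (fun r => ((ip (pd (1,0) (pd (1,0) φ) r) ((lam r ^ 2)⁻¹ • cross (pd (1,0) φ r) (pd (0,1) φ r)) + ip (pd (0,1) (pd (0,1) φ) r) ((lam r ^ 2)⁻¹ • cross (pd (1,0) φ r) (pd (0,1) φ r))) / (2 * lam r ^ 2))) p)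
        + 2 * lam p ^ 2 * pd (1,0) (pd (0,1) (fun r => ((ip (pd (1,0) (pd (1,0) φ) r) ((lam r ^ 2)⁻¹ • cross (pd (1,0) φ r) (pd (0,1) φ r)) + ip (pd (0,1) (pd (0,1) φ) r) ((lam r ^ 2)⁻¹ • cross (pd (1,0) φ r) (pd (0,1) φ r))) / (2 * lam r ^ 2)))) p := by
    linear_combination (-1 : ℝ) * K1u + Evu - K2v - cg + (2 * lam p * ((ip (pd (1,0) (pd (1,0) φ) p) ((lam p ^ 2)⁻¹ • cross (pd (1,0) φ p) (pd (0,1) φ p)) + ip (pd (0,1) (pd (0,1) φ) p) ((lam p ^ 2)⁻¹ • cross (pd (1,0) φ p) (pd (0,1) φ p))) / (2 * lam p ^ 2))) * clam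
  -- ## convert muQ
  have hmu : ∀ q ∈ U, muQ φ q
      = (4⁻¹:ℂ) * ((ip (pd (1,0) (pd (1,0) φ) q) ((lam q ^ 2)⁻¹ • cross (pd (1,0) φ q) (pd (0,1) φ q)) : ℝ) : ℂ) - (4⁻¹:ℂ) * ((ip (pd (0,1) (pd (0,1) φ) q) ((lam q ^ 2)⁻¹ • cross (pd (1,0) φ q) (pd (0,1) φ q)) : ℝ) : ℂ)
        - (Complex.I/2) * ((ip (pd (1,0) (pd (0,1) φ) q) ((lam q ^ 2)⁻¹ • cross (pd (1,0) φ q) (pd (0,1) φ q)) : ℝ) : ℂ) := by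
    intro q hq
    have dA := diffAt (hsA q hq)
    have dB := diffAt (hsB q hq)
    have hphi : phiz φ = fun r => (2:ℂ)⁻¹ • (toC (pd (1,0) φ r) - Complex.I • toC (pd (0,1) φ r)) := by
      funext r; simp only [phiz, pu_eq_pd, pv_eq_pd]
    have hpu : pd (1,0) (phiz φ) q
        = (2:ℂ)⁻¹ • (toC (pd (1,0) (pd (1,0) φ) q) - Complex.I • toC (pd (1,0) (pd (0,1) φ) q)) := by
      rw [hphi, pd_csmul (1,0) ((2:ℂ)⁻¹) ((diff_toC dA).fun_sub ((diff_toC dB).fun_const_smul Complex.I)),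
          pd_sub (1,0) (diff_toC dA) ((diff_toC dB).fun_const_smul Complex.I),
          pd_toC (1,0) dA, pd_csmul (1,0) Complex.I (diff_toC dB), pd_toC (1,0) dB]
    have hpv : pd (0,1) (phiz φ) q
        = (2:ℂ)⁻¹ • (toC (pd (1,0) (pd (0,1) φ) q) - Complex.I • toC (pd (0,1) (pd (0,1) φ) q)) := by
      rw [hphi, pd_csmul (0,1) ((2:ℂ)⁻¹) ((diff_toC dA).fun_sub ((diff_toC dB).fun_const_smul Complex.I)),
          pd_sub (0,1) (diff_toC dA) ((diff_toC dB).fun_const_smul Complex.I),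
          pd_toC (0,1) dA, pd_csmul (0,1) Complex.I (diff_toC dB), pd_toC (0,1) dB, hcl q hq]
    show cdot (dz (phiz φ) q) (toC (nvec φ q)) = _
    rw [dz_eq, hpu, hpv, hnvec q hq]
    simp only [cdot_smul_left, cdot_sub_left, cdot_toC_toC]
    linear_combination (4⁻¹ * ((ip (pd (0,1) (pd (0,1) φ) q) ((lam q ^ 2)⁻¹ • cross (pd (1,0) φ q) (pd (0,1) φ q)) : ℝ) : ℂ)) * Complex.I_sq
  -- ## convert mcurv
  have hmc : ∀ q ∈ U, ((mcurv φ lam q : ℝ) : ℂ) = ((((ip (pd (1,0) (pd (1,0) φ) q) ((lam q ^ 2)⁻¹ • cross (pd (1,0) φ q) (pd (0,1) φ q)) + ip (pd (0,1) (pd (0,1) φ) q) ((lam q ^ 2)⁻¹ • cross (pd (1,0) φ q) (pd (0,1) φ q))) / (2 * lam q ^ 2)) : ℝ) : ℂ) := by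
    intro q hq
    have : mcurv φ lam q = ((ip (pd (1,0) (pd (1,0) φ) q) ((lam q ^ 2)⁻¹ • cross (pd (1,0) φ q) (pd (0,1) φ q)) + ip (pd (0,1) (pd (0,1) φ) q) ((lam q ^ 2)⁻¹ • cross (pd (1,0) φ q) (pd (0,1) φ q))) / (2 * lam q ^ 2)) := by
      simp only [mcurv, lap, pu_eq_pd, pv_eq_pd]
      rw [hnvec q hq, ip_add_left]
    rw [this]
  -- ## dz λ
  have hdzlam : dz (fun q => ((lam q : ℝ) : ℂ)) p
      = (2:ℂ)⁻¹ * (((pd (1,0) lam p : ℝ) : ℂ) - Complex.I * ((pd (0,1) lam p : ℝ) : ℂ)) := by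
    rw [dz_eq, pd_ofReal (1,0) dLp, pd_ofReal (0,1) dLp]
    simp only [smul_eq_mul]
  -- ## dz H
  have hdzH : ∀ q ∈ U, dz (fun r => ((mcurv φ lam r : ℝ) : ℂ)) q
      = (2:ℂ)⁻¹ * (((pd (1,0) (fun r => ((ip (pd (1,0) (pd (1,0) φ) r) ((lam r ^ 2)⁻¹ • cross (pd (1,0) φ r) (pd (0,1) φ r)) + ip (pd (0,1) (pd (0,1) φ) r) ((lam r ^ 2)⁻¹ • cross (pd (1,0) φ r) (pd (0,1) φ r))) / (2 * lam r ^ 2))) q : ℝ) : ℂ) - Complex.I * ((pd (0,1) (fun r => ((ip (pd (1,0) (pd (1,0) φ) r) ((lam r ^ 2)⁻¹ • cross (pd (1,0) φ r) (pd (0,1) φ r)) + ip (pd (0,1) (pd (0,1) φ) r) ((lam r ^ 2)⁻¹ • cross (pd (1,0) φ r) (pd (0,1) φ r))) / (2 * lam r ^ 2))) q : ℝ) : ℂ)) := by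
    intro q hq
    rw [dz_eq, pd_congr_open hU hq (1,0) hmc, pd_congr_open hU hq (0,1) hmc,
        pd_ofReal (1,0) (diffAt (hsH q hq)), pd_ofReal (0,1) (diffAt (hsH q hq))]
    simp only [smul_eq_mul]
  -- ## dz dz H
  have hdzdz : dz (fun q => dz (fun r => ((mcurv φ lam r : ℝ) : ℂ)) q) p
      = (2:ℂ)⁻¹ * ((2:ℂ)⁻¹ * (((pd (1,0) (pd (1,0) (fun r => ((ip (pd (1,0) (pd (1,0) φ) r) ((lam r ^ 2)⁻¹ • cross (pd (1,0) φ r) (pd (0,1) φ r)) + ip (pd (0,1) (pd (0,1) φ) r) ((lam r ^ 2)⁻¹ • cross (pd (1,0) φ r) (pd (0,1) φ r))) / (2 * lam r ^ 2)))) p : ℝ) : ℂ)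
              - Complex.I * ((pd (1,0) (pd (0,1) (fun r => ((ip (pd (1,0) (pd (1,0) φ) r) ((lam r ^ 2)⁻¹ • cross (pd (1,0) φ r) (pd (0,1) φ r)) + ip (pd (0,1) (pd (0,1) φ) r) ((lam r ^ 2)⁻¹ • cross (pd (1,0) φ r) (pd (0,1) φ r))) / (2 * lam r ^ 2)))) p : ℝ) : ℂ))
          - Complex.I * ((2:ℂ)⁻¹ * (((pd (0,1) (pd (1,0) (fun r => ((ip (pd (1,0) (pd (1,0) φ) r) ((lam r ^ 2)⁻¹ • cross (pd (1,0) φ r) (pd (0,1) φ r)) + ip (pd (0,1) (pd (0,1) φ) r) ((lam r ^ 2)⁻¹ • cross (pd (1,0) φ r) (pd (0,1) φ r))) / (2 * lam r ^ 2)))) p : ℝ) : ℂ)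
              - Complex.I * ((pd (0,1) (pd (0,1) (fun r => ((ip (pd (1,0) (pd (1,0) φ) r) ((lam r ^ 2)⁻¹ • cross (pd (1,0) φ r) (pd (0,1) φ r)) + ip (pd (0,1) (pd (0,1) φ) r) ((lam r ^ 2)⁻¹ • cross (pd (1,0) φ r) (pd (0,1) φ r))) / (2 * lam r ^ 2)))) p : ℝ) : ℂ)))) := by
    rw [dz_eq]
    rw [pd_congr_open hU hp (1,0) hdzH, pd_congr_open hU hp (0,1) hdzH]
    have dsub : ∀ w : ℝ × ℝ, DifferentiableAt ℝ
        (fun r => ((pd (1,0) (fun r => ((ip (pd (1,0) (pd (1,0) φ) r) ((lam r ^ 2)⁻¹ • cross (pd (1,0) φ r) (pd (0,1) φ r)) + ip (pd (0,1) (pd (0,1) φ) r) ((lam r ^ 2)⁻¹ • cross (pd (1,0) φ r) (pd (0,1) φ r))) / (2 * lam r ^ 2))) r : ℝ) : ℂ) - Complex.I * ((pd (0,1) (fun r => ((ip (pd (1,0) (pd (1,0) φ) r) ((lam r ^ 2)⁻¹ • cross (pd (1,0) φ r) (pd (0,1) φ r)) + ip (pd (0,1) (pd (0,1) φ) r) ((lam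 r ^ 2)⁻¹ • cross (pd (1,0) φ r) (pd (0,1) φ r))) / (2 * lam r ^ 2))) r : ℝ) : ℂ)) p :=
      fun w => (diff_ofReal dHup).sub ((diff_ofReal dHvp).const_mul Complex.I)
    rw [pd_cst_cmul (1,0) ((2:ℂ)⁻¹) (dsub (1,0)),
        pd_sub (1,0) (diff_ofReal dHup) ((diff_ofReal dHvp).const_mul Complex.I),
        pd_ofReal (1,0) dHup, pd_cst_cmul (1,0) Complex.I (diff_ofReal dHvp),
        pd_ofReal (1,0) dHvp,
        pd_cst_cmul (0,1) ((2:ℂ)⁻¹) (dsub (0,1)),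
        pd_sub (0,1) (diff_ofReal dHup) ((diff_ofReal dHvp).const_mul Complex.I),
        pd_ofReal (0,1) dHup, pd_cst_cmul (0,1) Complex.I (diff_ofReal dHvp),
        pd_ofReal (0,1) dHvp]
    simp only [smul_eq_mul]
  -- ## expand Laplacian of μ
  have hmu1 : ∀ w : ℝ × ℝ, ∀ q ∈ U, pd w (fun r => muQ φ r) q
      = (4⁻¹:ℂ) * ((pd w (fun r => ip (pd (1,0) (pd (1,0) φ) r) ((lam r ^ 2)⁻¹ • cross (pd (1,0) φ r) (pd (0,1) φ r))) q : ℝ) : ℂ) - (4⁻¹:ℂ) * ((pd w (fun r => ip (pd (0,1) (pd (0,1) φ) r) ((lam r ^ 2)⁻¹ • cross (pd (1,0) φ r) (pd (0,1) φ r))) q : ℝ) : ℂ)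
        - (Complex.I/2) * ((pd w (fun r => ip (pd (1,0) (pd (0,1) φ) r) ((lam r ^ 2)⁻¹ • cross (pd (1,0) φ r) (pd (0,1) φ r))) q : ℝ) : ℂ) := by
    intro w q hq
    have dE := diffAt (hse q hq)
    have dF := diffAt (hsf q hq)
    have dG := diffAt (hsg q hq)
    rw [pd_congr_open hU hq w hmu,
        pd_sub w (((diff_ofReal dE).const_mul (4⁻¹:ℂ)).fun_sub ((diff_ofReal dG).const_mul (4⁻¹:ℂ)))
          ((diff_ofReal dF).const_mul (Complex.I/2)),
        pd_sub w ((diff_ofReal dE).const_mul (4⁻¹:ℂ)) ((diff_ofReal dG).const_mul (4⁻¹:ℂ)),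
        pd_cst_cmul w ((4⁻¹:ℂ)) (diff_ofReal dE), pd_ofReal w dE,
        pd_cst_cmul w ((4⁻¹:ℂ)) (diff_ofReal dG), pd_ofReal w dG,
        pd_cst_cmul w (Complex.I/2) (diff_ofReal dF), pd_ofReal w dF]
  have hlapmu : ∀ w : ℝ × ℝ, pd w (pd w (fun r => muQ φ r)) p
      = (4⁻¹:ℂ) * ((pd w (pd w (fun r => ip (pd (1,0) (pd (1,0) φ) r) ((lam r ^ 2)⁻¹ • cross (pd (1,0) φ r) (pd (0,1) φ r)))) p : ℝ) : ℂ) - (4⁻¹:ℂ) * ((pd w (pd w (fun r => ip (pd (0,1) (pd (0,1) φ) r) ((lam r ^ 2)⁻¹ • cross (pd (1,0) φ r) (pd (0,1) φ r)))) p : ℝ) : ℂ)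
        - (Complex.I/2) * ((pd w (pd w (fun r => ip (pd (1,0) (pd (0,1) φ) r) ((lam r ^ 2)⁻¹ • cross (pd (1,0) φ r) (pd (0,1) φ r)))) p : ℝ) : ℂ) := by
    intro w
    have dEw : DifferentiableAt ℝ (pd w (fun r => ip (pd (1,0) (pd (1,0) φ) r) ((lam r ^ 2)⁻¹ • cross (pd (1,0) φ r) (pd (0,1) φ r)))) p := diffAt (contDiffAt_pd w (hse p hp))
    have dFw : DifferentiableAt ℝ (pd w (fun r => ip (pd (1,0) (pd (0,1) φ) r) ((lam r ^ 2)⁻¹ • cross (pd (1,0) φ r) (pd (0,1) φ r)))) p := diffAt (contDiffAt_pd w (hsf p hp))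
    have dGw : DifferentiableAt ℝ (pd w (fun r => ip (pd (0,1) (pd (0,1) φ) r) ((lam r ^ 2)⁻¹ • cross (pd (1,0) φ r) (pd (0,1) φ r)))) p := diffAt (contDiffAt_pd w (hsg p hp))
    rw [pd_congr_open hU hp w (hmu1 w),
        pd_sub w (((diff_ofReal dEw).const_mul (4⁻¹:ℂ)).fun_sub ((diff_ofReal dGw).const_mul (4⁻¹:ℂ)))
          ((diff_ofReal dFw).const_mul (Complex.I/2)),
        pd_sub w ((diff_ofReal dEw).const_mul (4⁻¹:ℂ)) ((diff_ofReal dGw).const_mul (4⁻¹:ℂ)),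
        pd_cst_cmul w ((4⁻¹:ℂ)) (diff_ofReal dEw), pd_ofReal w dEw,
        pd_cst_cmul w ((4⁻¹:ℂ)) (diff_ofReal dGw), pd_ofReal w dGw,
        pd_cst_cmul w (Complex.I/2) (diff_ofReal dFw), pd_ofReal w dFw]
  -- ## final assembly
  have hreC : (((pd (1,0) (pd (1,0) (fun r => ip (pd (1,0) (pd (1,0) φ) r) ((lam r ^ 2)⁻¹ • cross (pd (1,0) φ r) (pd (0,1) φ r)))) p : ℝ) : ℂ) + ((pd (0,1) (pd (0,1) (fun r => ip (pd (1,0) (pd (1,0) φ) r) ((lam r ^ 2)⁻¹ • cross (pd (1,0) φ r) (pd (0,1) φ r)))) p : ℝ) : ℂ)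
        - ((pd (1,0) (pd (1,0) (fun r => ip (pd (0,1) (pd (0,1) φ) r) ((lam r ^ 2)⁻¹ • cross (pd (1,0) φ r) (pd (0,1) φ r)))) p : ℝ) : ℂ) - ((pd (0,1) (pd (0,1) (fun r => ip (pd (0,1) (pd (0,1) φ) r) ((lam r ^ 2)⁻¹ • cross (pd (1,0) φ r) (pd (0,1) φ r)))) p : ℝ) : ℂ))
      = 4 * (((lam p : ℝ) : ℂ) * (((pd (1,0) lam p : ℝ) : ℂ) * ((pd (1,0) (fun r => ((ip (pd (1,0) (pd (1,0) φ) r) ((lam r ^ 2)⁻¹ • cross (pd (1,0) φ r) (pd (0,1) φ r)) + ip (pd (0,1) (pd (0,1) φ) r) ((lam r ^ 2)⁻¹ • cross (pd (1,0) φ r) (pd (0,1) φ r))) / (2 * lam r ^ 2))) p : ℝ) : ℂ)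
            - ((pd (0,1) lam p : ℝ) : ℂ) * ((pd (0,1) (fun r => ((ip (pd (1,0) (pd (1,0) φ) r) ((lam r ^ 2)⁻¹ • cross (pd (1,0) φ r) (pd (0,1) φ r)) + ip (pd (0,1) (pd (0,1) φ) r) ((lam r ^ 2)⁻¹ • cross (pd (1,0) φ r) (pd (0,1) φ r))) / (2 * lam r ^ 2))) p : ℝ) : ℂ)))
        + 2 * ((lam p : ℝ) : ℂ) ^ 2 * (((pd (1,0) (pd (1,0) (fun r => ((ip (pd (1,0) (pd (1,0) φ) r) ((lam r ^ 2)⁻¹ • cross (pd (1,0) φ r) (pd (0,1) φ r)) + ip (pd (0,1) (pd (0,1) φ) r) ((lam r ^ 2)⁻¹ • cross (pd (1,0) φ r) (pd (0,1) φ r))) / (2 * lam r ^ 2)))) p : ℝ) : ℂ)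
            - ((pd (0,1) (pd (0,1) (fun r => ((ip (pd (1,0) (pd (1,0) φ) r) ((lam r ^ 2)⁻¹ • cross (pd (1,0) φ r) (pd (0,1) φ r)) + ip (pd (0,1) (pd (0,1) φ) r) ((lam r ^ 2)⁻¹ • cross (pd (1,0) φ r) (pd (0,1) φ r))) / (2 * lam r ^ 2)))) p : ℝ) : ℂ)) := by
    exact_mod_cast congrArg (fun x : ℝ => (x : ℂ)) hre
  have himC : (((pd (1,0) (pd (1,0) (fun r => ip (pd (1,0) (pd (0,1) φ) r) ((lam r ^ 2)⁻¹ • cross (pd (1,0) φ r) (pd (0,1) φ r)))) p : ℝ) : ℂ) + ((pd (0,1) (pd (0,1) (fun r => ip (pd (1,0) (pd (0,1) φ) r) ((lam r ^ 2)⁻¹ • cross (pd (1,0) φ r) (pd (0,1) φ r)))) p : ℝ) : ℂ))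
      = 2 * ((lam p : ℝ) : ℂ) * (((pd (1,0) lam p : ℝ) : ℂ) * ((pd (0,1) (fun r => ((ip (pd (1,0) (pd (1,0) φ) r) ((lam r ^ 2)⁻¹ • cross (pd (1,0) φ r) (pd (0,1) φ r)) + ip (pd (0,1) (pd (0,1) φ) r) ((lam r ^ 2)⁻¹ • cross (pd (1,0) φ r) (pd (0,1) φ r))) / (2 * lam r ^ 2))) p : ℝ) : ℂ)
            + ((pd (0,1) lam p : ℝ) : ℂ) * ((pd (1,0) (fun r => ((ip (pd (1,0) (pd (1,0) φ) r) ((lam r ^ 2)⁻¹ • cross (pd (1,0) φ r) (pd (0,1) φ r)) + ip (pd (0,1) (pd (0,1) φ) r) ((lam r ^ 2)⁻¹ • cross (pd (1,0) φ r) (pd (0,1) φ r))) / (2 * lam r ^ 2))) p : ℝ) : ℂ))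
        + 2 * ((lam p : ℝ) : ℂ) ^ 2 * ((pd (1,0) (pd (0,1) (fun r => ((ip (pd (1,0) (pd (1,0) φ) r) ((lam r ^ 2)⁻¹ • cross (pd (1,0) φ r) (pd (0,1) φ r)) + ip (pd (0,1) (pd (0,1) φ) r) ((lam r ^ 2)⁻¹ • cross (pd (1,0) φ r) (pd (0,1) φ r))) / (2 * lam r ^ 2)))) p : ℝ) : ℂ) := by
    exact_mod_cast congrArg (fun x : ℝ => (x : ℂ)) him
  have cHC : ((pd (1,0) (pd (0,1) (fun r => ((ip (pd (1,0) (pd (1,0) φ) r) ((lam r ^ 2)⁻¹ • cross (pd (1,0) φ r) (pd (0,1) φ r)) + ip (pd (0,1) (pd (0,1) φ) r) ((lam r ^ 2)⁻¹ • cross (pd (1,0) φ r) (pd (0,1) φ r))) / (2 * lam r ^ 2)))) p : ℝ) : ℂ) = ((pd (0,1) (pd (1,0) (fun r => ((ip (pd (1,0) (pd (1,0) φ) r) ((lam r ^ 2)⁻¹ • cross (pd (1,0) φ r) (pd (0,1) φ r)) + ip (pd (0,1) (pd (0,1) φ) r) ((lam r ^ 2)⁻¹ • cross (pd (1,0) φ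 r) (pd (0,1) φ r))) / (2 * lam r ^ 2)))) p : ℝ) : ℂ) := by
    exact_mod_cast congrArg (fun x : ℝ => (x : ℂ)) cH
  simp only [lap, pu_eq_pd, pv_eq_pd]
  rw [hlapmu (1,0), hlapmu (0,1), hdzlam, hdzH p hp, hdzdz]
  linear_combination (4⁻¹:ℂ) * hreC - (Complex.I/2) * himC
    - (((lam p : ℝ) : ℂ) * ((pd (0,1) lam p : ℝ) : ℂ) * ((pd (0,1) (fun r => ((ip (pd (1,0) (pd (1,0) φ) r) ((lam r ^ 2)⁻¹ • cross (pd (1,0) φ r) (pd (0,1) φ r)) + ip (pd (0,1) (pd (0,1) φ) r) ((lam r ^ 2)⁻¹ • cross (pd (1,0) φ r) (pd (0,1) φ r))) / (2 * lam r ^ 2))) p : ℝ) : ℂ)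
        + ((lam p : ℝ) : ℂ)^2 * ((pd (0,1) (pd (0,1) (fun r => ((ip (pd (1,0) (pd (1,0) φ) r) ((lam r ^ 2)⁻¹ • cross (pd (1,0) φ r) (pd (0,1) φ r)) + ip (pd (0,1) (pd (0,1) φ) r) ((lam r ^ 2)⁻¹ • cross (pd (1,0) φ r) (pd (0,1) φ r))) / (2 * lam r ^ 2)))) p : ℝ) : ℂ) / 2) * Complex.I_sq
    - (Complex.I * ((lam p : ℝ) : ℂ)^2 / 2) * cHC
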